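/- Let X be a smooth projective variety and E, F globally generated vector bundles on X of dimension n. Then s_i(E^*)·s_{n-i}(F^*) ≥ 0 for all 0 ≤ i ≤ n, and E ⊕ F is big if and only if s_i(E^*)·s_{n-i}(F^*) > 0 for some i ∈ {0,…,n}. In particular, if E is big then E ⊕ F is big. -/
import Mathlib


/-- Bigness of direct sums (Lemma `big` of the paper), in the Chow ring `R` of an
`n`-dimensional smooth projective variety `X` with degree map `deg`. Here `sE i`, `sF i`,
`sEF i` denote the Segre classes `s_i(E^*)`, `s_i(F^*)`, `s_i((E⊕F)^*)` of the globally
generated bundles `E`, `F` and `E ⊕ F`; global generation makes each `s_i(E^*)` an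
effective class and each `s_j(F^*)` a nef class (`heffE`, `hnefF`); `s_0(F^*) = 1`;
Whitney gives `s_n((E⊕F)^*) = Σ_{i=0}^n s_i(E^*)·s_{n-i}(F^*)`; and a globally generated
bundle is big iff its top dual Segre number is positive (`hBigE`, `hBigEF`).
Then: `s_i(E^*)·s_{n-i}(F^*) ≥ 0` for all `0 ≤ i ≤ n`; `E ⊕ F` is big iff
`s_i(E^*)·s_{n-i}(F^*) > 0` for some `i`; in particular if `E` is big then `E ⊕ F` is big. -/
theorem stmt_8 {R : Type*} [CommRing R] (n : ℕ) (deg : R →+ ℤ)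
    (sE sF sEF : ℕ → R)
    (eff : R → Prop)
    (heffE : ∀ i, eff (sE i))
    (hnefF : ∀ j, ∀ z : R, eff z → 0 ≤ deg (sF j * z))
    (hsF0 : sF 0 = 1)
    (hWhitney : sEF n = ∑ i ∈ Finset.range (n + 1), sE i * sF (n - i))
    (BigE BigEF : Prop)
    (hBigE : BigE ↔ 0 < deg (sE n))
    (hBigEF : BigEF ↔ 0 < deg (sEF n)) :
    (∀ i ≤ n, 0 ≤ deg (sE i * sF (n - i))) ∧
      (BigEF ↔ ∃ i ≤ n, 0 < deg (sE i * sF (n - i))) ∧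
      (BigE → BigEF) := by
  have hterm : ∀ i, 0 ≤ deg (sE i * sF (n - i)) := fun i => by
    rw [mul_comm]; exact hnefF _ _ (heffE i)
  have hsum : deg (sEF n) = ∑ i ∈ Finset.range (n + 1), deg (sE i * sF (n - i)) := by
    rw [hWhitney, map_sum]
  refine ⟨fun i _ => hterm i, ?_, ?_⟩
  · rw [hBigEF, hsum]
    constructor
    · intro hpos
      by_contra h
      push_neg at h
      have hle : ∑ i ∈ Finset.range (n + 1), deg (sE i * sF (n - i)) ≤ 0 :=
        Finset.sum_nonpos fun i hi =>
          h i (Nat.lt_succ_iff.mp (Finset.mem_range.mp hi))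
      omega
    · rintro ⟨i, hi, hpos⟩
      exact Finset.sum_pos' (fun j _ => hterm j)
        ⟨i, Finset.mem_range.mpr (Nat.lt_succ_of_le hi), hpos⟩
  · intro hE
    rw [hBigEF, hsum]
    apply Finset.sum_pos' (fun j _ => hterm j)
    refine ⟨n, Finset.self_mem_range_succ n, ?_⟩
    simpa [hsF0] using hBigE.mp hE
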